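/- For n ∈ ℕ and indices i < j (with i, j in the appropriate ranges), consider the mixed cosimplicial identity σʲ ∘ δⁱ = δⁱ ∘ σʲ⁻¹ as a commutative square of maps of types, where δᵏ : Fin(m+1) → Fin(m+2) is the unique order-preserving injection whose image omits k, and σᵏ : Fin(m+2) → Fin(m+1) is the unique order-preserving surjection taking the value k twice. This commutative square is a pullback square in the category of types. -/

import Mathlib

open CategoryTheory Limits in
private lemma delta_sigma_comm
    (n : ℕ) (i : Fin (n + 2)) (j : Fin (n + 1)) (h : i ≤ j.castSucc)
    (x : Fin (n + 2)) :
    j.succ.predAbove (i.castSucc.succAbove x) = i.succAbove (j.predAbove x) := by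
  have := SimplexCategory.δ_comp_σ_of_le (n := n) h
  have := congrArg (fun f => SimplexCategory.Hom.toOrderHom f x) this
  simpa [SimplexCategory.δ, SimplexCategory.σ] using this

open CategoryTheory in
/-- The mixed cosimplicial identity square `σ_{j+1} ∘ δ_i = δ_i ∘ σ_j`
(for `i ≤ j` as naturals, i.e. `i < j+1`), formed by the coface maps
`δ_k = Fin.succAbove k` and the codegeneracy maps `σ_k = Fin.predAbove k`, is a
pullback square in the category of types. -/
theorem delta_sigma_square_isPullback
    (n : ℕ) (i : Fin (n + 2)) (j : Fin (n + 1)) (h : i ≤ j.castSucc) :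
    IsPullback (C := Type)
      (TypeCat.ofHom (Fin.succAbove i.castSucc : Fin (n + 2) → Fin (n + 3)))
      (TypeCat.ofHom (Fin.predAbove j : Fin (n + 2) → Fin (n + 1)))
      (TypeCat.ofHom (Fin.predAbove j.succ : Fin (n + 3) → Fin (n + 2)))
      (TypeCat.ofHom (Fin.succAbove i : Fin (n + 1) → Fin (n + 2))) := by
  have w : CommSq (C := Type)
      (TypeCat.ofHom (Fin.succAbove i.castSucc : Fin (n + 2) → Fin (n + 3)))
      (TypeCat.ofHom (Fin.predAbove j : Fin (n + 2) → Fin (n + 1)))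
      (TypeCat.ofHom (Fin.predAbove j.succ : Fin (n + 3) → Fin (n + 2)))
      (TypeCat.ofHom (Fin.succAbove i : Fin (n + 1) → Fin (n + 2))) :=
    ⟨by ext x; simpa using congrArg Fin.val (delta_sigma_comm n i j h x)⟩
  apply IsPullback.of_isLimit' w
  refine (Limits.PullbackCone.isLimitEquivBijective w.cone).symm ⟨?_, ?_⟩
  · intro x y hxy
    have h1 := congrArg (fun p => p.1.1) hxy
    exact i.castSucc.succAbove_right_injective h1
  · rintro ⟨⟨a, b⟩, hab⟩
    -- hab : predAbove j.succ a = succAbove i b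
    have ha : a ≠ i.castSucc := by
      intro hEq
      subst hEq
      have hle : (i.castSucc : Fin (n + 3)) ≤ j.succ.castSucc := by
        simp only [Fin.castSucc_le_castSucc_iff]
        exact h.trans j.castSucc_le_succ
      change j.succ.predAbove i.castSucc = i.succAbove b at hab
      rw [Fin.predAbove_of_le_castSucc _ _ hle] at hab
      have : i.castSucc.castPred (by
          intro hl
          exact (Fin.castSucc_lt_last i).ne (Fin.castSucc_injective _ (by
            simpa using congrArg id hl))) = i := by
        ext; simp
      rw [this] at hab
      exact (Fin.succAbove_ne i b) hab.symm
    obtain ⟨x, hx⟩ := Fin.exists_succAbove_eq ha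
    refine ⟨x, ?_⟩
    have hsnd : j.predAbove x = b := by
      apply i.succAbove_right_injective
      rw [← delta_sigma_comm n i j h x, hx]
      exact hab
    exact Subtype.ext (Prod.ext hx hsnd)
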